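/- For every integer k ≥ 3 there exists a finite simple graph G with the following two properties: (i) there is a set M ⊆ V(G) with |M| = 2 such that G − M has a unique minimum vertex cover, and no set of size at most 1 has this property; and (ii) every set P ⊆ V(G) for which there exists a unique minimum vertex cover of G containing P satisfies |P| ≥ k. -/

import Mathlib

/-- `M` is a vertex cover of the finite simple graph `G`. -/
def IsVertexCover {V : Type*} (G : SimpleGraph V) (M : Finset V) : Prop :=
  ∀ ⦃u v : V⦄, G.Adj u v → u ∈ M ∨ v ∈ M

/-- `M` is a minimum vertex cover of `G`. -/
def IsMinVertexCover {V : Type*} (G : SimpleGraph V) (M : Finset V) : Prop :=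
  IsVertexCover G M ∧ ∀ M' : Finset V, IsVertexCover G M' → M.card ≤ M'.card

/-- `M` is a vertex cover of `G - S`, the subgraph of `G` induced on the
vertices outside `S`. -/
def IsVertexCoverDel {V : Type*} (G : SimpleGraph V) (S M : Finset V) : Prop :=
  (∀ x ∈ M, x ∉ S) ∧ ∀ ⦃u v : V⦄, G.Adj u v → u ∉ S → v ∉ S → u ∈ M ∨ v ∈ M

/-- `G - S` has a unique minimum vertex cover. -/
def HasUniqueMinVCDel {V : Type*} (G : SimpleGraph V) (S : Finset V) : Prop :=
  ∃! M : Finset V, IsVertexCoverDel G S M ∧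
    ∀ M' : Finset V, IsVertexCoverDel G S M' → M.card ≤ M'.card

open Finset

inductive Vtx (k : ℕ) where
  | a : Fin k → Vtx k
  | b : Fin k → Vtx k
  | d : Fin k → Vtx k
  | x : Vtx k
  | y : Vtx k
  | w : Vtx k
  | z : Vtx k
deriving DecidableEq, Fintype

namespace Vtx

variable {k : ℕ}

/-- one-sided adjacency relation -/
def rel : Vtx k → Vtx k → Bool
  | .a _, .a _ => true
  | .a _, .b _ => true
  | .b _, .b _ => true
  | .b i, .d j => i == j
  | .b _, .x => true
  | .b _, .y => true
  | .a _, .w => true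
  | .b _, .w => true
  | .a _, .z => true
  | .x, .z => true
  | .y, .z => true
  | _, _ => false

def Gr (k : ℕ) : SimpleGraph (Vtx k) :=
  SimpleGraph.fromRel (fun u v => rel u v = true)

lemma adj_iff {u v : Vtx k} :
    (Gr k).Adj u v ↔ u ≠ v ∧ (rel u v = true ∨ rel v u = true) :=
  SimpleGraph.fromRel_adj _ u v

def DD (k : ℕ) : Finset (Vtx k) := Finset.univ.image Vtx.d
def AA (k : ℕ) : Finset (Vtx k) := Finset.univ.image Vtx.a
def BB (k : ℕ) : Finset (Vtx k) := Finset.univ.image Vtx.b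
def I0 (k : ℕ) : Finset (Vtx k) := DD k ∪ {Vtx.x, Vtx.y, Vtx.w}
def II {k : ℕ} (i : Fin k) : Finset (Vtx k) := DD k ∪ {Vtx.x, Vtx.y, Vtx.a i}
def JJ (k : ℕ) : Finset (Vtx k) := DD k ∪ {Vtx.w, Vtx.z}

@[simp] lemma mem_DD {u : Vtx k} : u ∈ DD k ↔ ∃ i, Vtx.d i = u := by simp [DD]
@[simp] lemma mem_AA {u : Vtx k} : u ∈ AA k ↔ ∃ i, Vtx.a i = u := by simp [AA]
@[simp] lemma mem_BB {u : Vtx k} : u ∈ BB k ↔ ∃ i, Vtx.b i = u := by simp [BB]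

lemma card_DD : (DD k).card = k := by
  rw [DD, Finset.card_image_of_injective _ (fun i j h => by injection h)]
  simp

lemma card_AA : (AA k).card = k := by
  rw [AA, Finset.card_image_of_injective _ (fun i j h => by injection h)]
  simp

lemma card_BB : (BB k).card = k := by
  rw [BB, Finset.card_image_of_injective _ (fun i j h => by injection h)]
  simp

lemma disj_DD_xyw : Disjoint (DD k) ({Vtx.x, Vtx.y, Vtx.w} : Finset (Vtx k)) := by
  rw [Finset.disjoint_left]
  rintro u hu hv
  rcases mem_DD.mp hu with ⟨i, rfl⟩
  simp at hv

lemma disj_DD_xya (i : Fin k) :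
    Disjoint (DD k) ({Vtx.x, Vtx.y, Vtx.a i} : Finset (Vtx k)) := by
  rw [Finset.disjoint_left]
  rintro u hu hv
  rcases mem_DD.mp hu with ⟨j, rfl⟩
  simp at hv

lemma disj_DD_wz : Disjoint (DD k) ({Vtx.w, Vtx.z} : Finset (Vtx k)) := by
  rw [Finset.disjoint_left]
  rintro u hu hv
  rcases mem_DD.mp hu with ⟨j, rfl⟩
  simp at hv

lemma card_I0 : (I0 k).card = k + 3 := by
  rw [I0, Finset.card_union_of_disjoint disj_DD_xyw, card_DD]
  simp

lemma card_II (i : Fin k) : (II i).card = k + 3 := by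
  rw [II, Finset.card_union_of_disjoint (disj_DD_xya i), card_DD]
  simp

lemma card_JJ : (JJ k).card = k + 2 := by
  rw [JJ, Finset.card_union_of_disjoint disj_DD_wz, card_DD]
  simp

lemma card_vtx : Fintype.card (Vtx k) = 3 * k + 4 := by
  have huniv : (Finset.univ : Finset (Vtx k)) =
      (AA k ∪ BB k ∪ DD k) ∪ {Vtx.x, Vtx.y, Vtx.w, Vtx.z} := by
    ext u
    cases u <;> simp
  have d1 : Disjoint (AA k) (BB k) := by
    rw [Finset.disjoint_left]; rintro u hu hv
    rcases mem_AA.mp hu with ⟨i, rfl⟩; simp at hv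
  have d2 : Disjoint (AA k ∪ BB k) (DD k) := by
    rw [Finset.disjoint_left]; rintro u hu hv
    rcases mem_DD.mp hv with ⟨i, rfl⟩; simp at hu
  have d3 : Disjoint (AA k ∪ BB k ∪ DD k) ({Vtx.x, Vtx.y, Vtx.w, Vtx.z} : Finset (Vtx k)) := by
    rw [Finset.disjoint_right]; rintro u hu hv
    rcases Finset.mem_union.mp hv with hv | hv
    · rcases Finset.mem_union.mp hv with hv | hv
      · rcases mem_AA.mp hv with ⟨i, rfl⟩; simp at hu
      · rcases mem_BB.mp hv with ⟨i, rfl⟩; simp at hu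
    · rcases mem_DD.mp hv with ⟨i, rfl⟩; simp at hu
  rw [← Finset.card_univ, huniv, Finset.card_union_of_disjoint d3,
    Finset.card_union_of_disjoint d2, Finset.card_union_of_disjoint d1,
    card_AA, card_BB, card_DD]
  have : ({Vtx.x, Vtx.y, Vtx.w, Vtx.z} : Finset (Vtx k)).card = 4 := by simp
  omega

/-- independence -/
def Indep (T : Finset (Vtx k)) : Prop := ∀ u ∈ T, ∀ v ∈ T, ¬ (Gr k).Adj u v

lemma Indep.mono {T S : Finset (Vtx k)} (h : Indep T) (hs : S ⊆ T) : Indep S :=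
  fun u hu v hv => h u (hs hu) v (hs hv)

lemma indep_I0 : Indep (I0 k) := by
  intro u hu v hv hadj
  obtain ⟨hne, h⟩ := adj_iff.mp hadj
  have hu' : u = Vtx.x ∨ u = Vtx.y ∨ (∃ i, u = Vtx.d i) ∨ u = Vtx.w := by
    simp [I0, eq_comm] at hu; tauto
  have hv' : v = Vtx.x ∨ v = Vtx.y ∨ (∃ i, v = Vtx.d i) ∨ v = Vtx.w := by
    simp [I0, eq_comm] at hv; tauto
  rcases hu' with rfl | rfl | ⟨i, rfl⟩ | rfl <;>
    rcases hv' with rfl | rfl | ⟨j, rfl⟩ | rfl <;>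
      first
        | exact hne rfl
        | simp [rel] at h

lemma indep_II (i : Fin k) : Indep (II i) := by
  intro u hu v hv hadj
  obtain ⟨hne, h⟩ := adj_iff.mp hadj
  have hu' : u = Vtx.x ∨ u = Vtx.y ∨ (∃ j, u = Vtx.d j) ∨ u = Vtx.a i := by
    simp [II, eq_comm] at hu; tauto
  have hv' : v = Vtx.x ∨ v = Vtx.y ∨ (∃ j, v = Vtx.d j) ∨ v = Vtx.a i := by
    simp [II, eq_comm] at hv; tauto
  rcases hu' with rfl | rfl | ⟨p, rfl⟩ | rfl <;>
    rcases hv' with rfl | rfl | ⟨q, rfl⟩ | rfl <;>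
      first
        | exact hne rfl
        | simp [rel] at h

lemma indep_JJ : Indep (JJ k) := by
  intro u hu v hv hadj
  obtain ⟨hne, h⟩ := adj_iff.mp hadj
  have hu' : u = Vtx.w ∨ (∃ i, u = Vtx.d i) ∨ u = Vtx.z := by
    simp [JJ, eq_comm] at hu; tauto
  have hv' : v = Vtx.w ∨ (∃ i, v = Vtx.d i) ∨ v = Vtx.z := by
    simp [JJ, eq_comm] at hv; tauto
  rcases hu' with rfl | ⟨i, rfl⟩ | rfl <;>
    rcases hv' with rfl | ⟨j, rfl⟩ | rfl <;>
      first
        | exact hne rfl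
        | simp [rel] at h

lemma no_adj {T : Finset (Vtx k)} (hT : Indep T) {u v : Vtx k} (hu : u ∈ T)
    (hv : v ∈ T) (hne : u ≠ v) (h : rel u v = true ∨ rel v u = true) : False :=
  hT u hu v hv (adj_iff.mpr ⟨hne, h⟩)

/-- Every independent set lies in one of four canonical sets. -/
lemma main_cases {T : Finset (Vtx k)} (hT : Indep T) :
    T ⊆ I0 k ∨ (∃ i, T ⊆ II i) ∨ T ⊆ JJ k ∨
      (∃ i : Fin k, T ⊆ insert (Vtx.b i) ((DD k).erase (Vtx.d i) ∪ {Vtx.z})) := by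
  by_cases hb : ∃ i, Vtx.b i ∈ T
  · obtain ⟨i, hbi⟩ := hb
    refine Or.inr (Or.inr (Or.inr ⟨i, ?_⟩))
    intro u hu
    cases u with
    | a j => exact (no_adj hT hu hbi (by simp) (Or.inl rfl)).elim
    | b j =>
        by_cases hji : j = i
        · subst hji; simp
        · exact (no_adj hT hu hbi (by simpa using hji) (Or.inl rfl)).elim
    | d j =>
        by_cases hji : j = i
        · subst hji
          exact (no_adj hT hu hbi (by simp) (Or.inr (by simp [rel]))).elim
        · simp only [Finset.mem_insert, Finset.mem_union, Finset.mem_erase]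
          refine Or.inr (Or.inl ⟨?_, by simp⟩)
          intro hdd; exact hji (by injection hdd)
    | x => exact (no_adj hT hu hbi (by simp) (Or.inr rfl)).elim
    | y => exact (no_adj hT hu hbi (by simp) (Or.inr rfl)).elim
    | w => exact (no_adj hT hu hbi (by simp) (Or.inr rfl)).elim
    | z => simp
  · by_cases ha : ∃ i, Vtx.a i ∈ T
    · obtain ⟨i, hai⟩ := ha
      refine Or.inr (Or.inl ⟨i, ?_⟩)
      intro u hu
      cases u with
      | a j =>
          by_cases hji : j = i
          · subst hji; simp [II]
          · exact (no_adj hT hu hai (by simpa using hji) (Or.inl rfl)).elim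
      | b j => exact absurd ⟨j, hu⟩ hb
      | d j => simp [II]
      | x => simp [II]
      | y => simp [II]
      | w => exact (no_adj hT hu hai (by simp) (Or.inr rfl)).elim
      | z => exact (no_adj hT hu hai (by simp) (Or.inr rfl)).elim
    · by_cases hz : Vtx.z ∈ T
      · refine Or.inr (Or.inr (Or.inl ?_))
        intro u hu
        cases u with
        | a j => exact absurd ⟨j, hu⟩ ha
        | b j => exact absurd ⟨j, hu⟩ hb
        | d j => simp [JJ]
        | x => exact (no_adj hT hu hz (by simp) (Or.inl rfl)).elim
        | y => exact (no_adj hT hu hz (by simp) (Or.inl rfl)).elim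
        | w => simp [JJ]
        | z => simp [JJ]
      · refine Or.inl ?_
        intro u hu
        cases u with
        | a j => exact absurd ⟨j, hu⟩ ha
        | b j => exact absurd ⟨j, hu⟩ hb
        | d j => simp [I0]
        | x => simp [I0]
        | y => simp [I0]
        | w => simp [I0]
        | z => exact absurd hu hz


lemma d_mem_DD (i : Fin k) : Vtx.d i ∈ DD k := by simp
lemma d_mem_I0 (i : Fin k) : Vtx.d i ∈ I0 k := by simp [I0]
lemma d_mem_II (i j : Fin k) : Vtx.d i ∈ II j := by simp [II]
lemma x_mem_I0 : Vtx.x ∈ I0 k := by simp [I0]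
lemma x_mem_II (j : Fin k) : Vtx.x ∈ II j := by simp [II]
lemma y_mem_I0 : Vtx.y ∈ I0 k := by simp [I0]
lemma y_mem_II (j : Fin k) : Vtx.y ∈ II j := by simp [II]
lemma w_mem_I0 : Vtx.w ∈ I0 k := by simp [I0]
lemma w_not_mem_II (j : Fin k) : Vtx.w ∉ II j := by simp [II]
lemma a_not_mem_I0 (i : Fin k) : Vtx.a i ∉ I0 k := by simp [I0]
lemma a_mem_II (i : Fin k) : Vtx.a i ∈ II i := by simp [II]
lemma a_mem_II_iff {i j : Fin k} : Vtx.a i ∈ II j ↔ i = j := by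
  simp only [II, Finset.mem_union, Finset.mem_insert, Finset.mem_singleton, mem_DD]
  constructor
  · rintro (⟨p, h⟩ | h | h | h) <;> first | (injection h; omega) | (simp_all) | (injection h with h; exact h.symm) | skip
  · rintro rfl; simp

lemma card_bcase_le (i : Fin k) :
    (insert (Vtx.b i) ((DD k).erase (Vtx.d i) ∪ {Vtx.z})).card ≤ k + 1 := by
  have h1 : ((DD k).erase (Vtx.d i)).card = k - 1 := by
    rw [Finset.card_erase_of_mem (d_mem_DD i), card_DD]
  have h2 := Finset.card_union_le ((DD k).erase (Vtx.d i)) ({Vtx.z} : Finset (Vtx k))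
  have h3 := Finset.card_insert_le (Vtx.b i) (((DD k).erase (Vtx.d i)) ∪ {Vtx.z})
  have hk : 0 < k := i.pos
  simp only [Finset.card_singleton] at h2
  omega

lemma indep_card_le {T : Finset (Vtx k)} (hT : Indep T) : T.card ≤ k + 3 := by
  rcases main_cases hT with h | ⟨i, h⟩ | h | ⟨i, h⟩
  · have := Finset.card_le_card h; rw [card_I0] at this; omega
  · have := Finset.card_le_card h; rw [card_II] at this; omega
  · have := Finset.card_le_card h; rw [card_JJ] at this; omega
  · have := Finset.card_le_card h; have := card_bcase_le i; omega

lemma indep_eq {T : Finset (Vtx k)} (hT : Indep T) (hc : k + 3 ≤ T.card) :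
    T = I0 k ∨ ∃ i, T = II i := by
  rcases main_cases hT with h | ⟨i, h⟩ | h | ⟨i, h⟩
  · exact Or.inl (Finset.eq_of_subset_of_card_le h (by rw [card_I0]; exact hc))
  · exact Or.inr ⟨i, Finset.eq_of_subset_of_card_le h (by rw [card_II]; exact hc)⟩
  · have := Finset.card_le_card h; rw [card_JJ] at this; omega
  · have := Finset.card_le_card h; have := card_bcase_le i; omega

lemma indep_xy {T : Finset (Vtx k)} (hT : Indep T) (hx : Vtx.x ∉ T)
    (hy : Vtx.y ∉ T) : T ⊆ JJ k ∨ T.card ≤ k + 1 := by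
  rcases main_cases hT with h | ⟨i, h⟩ | h | ⟨i, h⟩
  · refine Or.inr ?_
    have hsub : T ⊆ DD k ∪ {Vtx.w} := by
      intro u hu
      have h2 := h hu
      simp only [I0, Finset.mem_union, Finset.mem_insert, Finset.mem_singleton] at h2 ⊢
      rcases h2 with h2 | h2 | h2 | h2
      · exact Or.inl h2
      · subst h2; exact absurd hu hx
      · subst h2; exact absurd hu hy
      · exact Or.inr h2
    have h3 := Finset.card_le_card hsub
    have h4 := Finset.card_union_le (DD k) ({Vtx.w} : Finset (Vtx k))
    simp only [Finset.card_singleton] at h4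
    rw [card_DD] at h4
    omega
  · refine Or.inr ?_
    have hsub : T ⊆ DD k ∪ {Vtx.a i} := by
      intro u hu
      have h2 := h hu
      simp only [II, Finset.mem_union, Finset.mem_insert, Finset.mem_singleton] at h2 ⊢
      rcases h2 with h2 | h2 | h2 | h2
      · exact Or.inl h2
      · subst h2; exact absurd hu hx
      · subst h2; exact absurd hu hy
      · exact Or.inr h2
    have h3 := Finset.card_le_card hsub
    have h4 := Finset.card_union_le (DD k) ({Vtx.a i} : Finset (Vtx k))
    simp only [Finset.card_singleton] at h4
    rw [card_DD] at h4
    omega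
  · exact Or.inl h
  · have := Finset.card_le_card h; have := card_bcase_le i; omega

lemma indep_xy_card_le {T : Finset (Vtx k)} (hT : Indep T) (hx : Vtx.x ∉ T)
    (hy : Vtx.y ∉ T) : T.card ≤ k + 2 := by
  rcases indep_xy hT hx hy with h | h
  · have := Finset.card_le_card h; rw [card_JJ] at this; omega
  · omega

lemma indep_xy_eq {T : Finset (Vtx k)} (hT : Indep T) (hx : Vtx.x ∉ T)
    (hy : Vtx.y ∉ T) (hc : k + 2 ≤ T.card) : T = JJ k := by
  rcases indep_xy hT hx hy with h | h
  · exact Finset.eq_of_subset_of_card_le h (by rw [card_JJ]; exact hc)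
  · omega

lemma indep_card_le_of_mem_all {T : Finset (Vtx k)} {v : Vtx k} (hT : Indep T)
    (h0 : v ∈ I0 k) (hi : ∀ j, v ∈ II j) (hv : v ∉ T) : T.card ≤ k + 2 := by
  by_contra h
  push_neg at h
  rcases indep_eq hT (by omega) with rfl | ⟨i, rfl⟩
  · exact hv h0
  · exact hv (hi i)

/-! complement machinery -/

lemma compl_indep_of_coverDel {M C : Finset (Vtx k)}
    (h : IsVertexCoverDel (Gr k) M C) : Indep (Finset.univ \ (M ∪ C)) := by
  intro u hu v hv hadj
  simp only [Finset.mem_sdiff, Finset.mem_univ, Finset.mem_union, true_and] at hu hv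
  push_neg at hu hv
  rcases h.2 hadj hu.1 hv.1 with h' | h'
  exacts [hu.2 h', hv.2 h']

lemma coverDel_compl {M T : Finset (Vtx k)} (hT : Indep T) (hMT : ∀ z ∈ T, z ∉ M) :
    IsVertexCoverDel (Gr k) M (Finset.univ \ (M ∪ T)) := by
  constructor
  · intro z hz
    simp only [Finset.mem_sdiff, Finset.mem_univ, Finset.mem_union, true_and] at hz
    push_neg at hz
    exact hz.1
  · intro u v hadj hu hv
    by_contra hc
    push_neg at hc
    have hu' : u ∈ T := by
      by_contra h'
      exact hc.1 (Finset.mem_sdiff.mpr ⟨Finset.mem_univ _,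
        fun hm => (Finset.mem_union.mp hm).elim hu h'⟩)
    have hv' : v ∈ T := by
      by_contra h'
      exact hc.2 (Finset.mem_sdiff.mpr ⟨Finset.mem_univ _,
        fun hm => (Finset.mem_union.mp hm).elim hv h'⟩)
    exact hT u hu' v hv' hadj

lemma card_compl {M S : Finset (Vtx k)} (h : ∀ z ∈ S, z ∉ M) :
    (Finset.univ \ (M ∪ S)).card + M.card + S.card = 3 * k + 4 := by
  have hd : Disjoint M S := Finset.disjoint_right.mpr h
  have h1 : (M ∪ S).card = M.card + S.card := Finset.card_union_of_disjoint hd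
  have h2 : (M ∪ S).card ≤ Fintype.card (Vtx k) := Finset.card_le_univ _
  have h3 : Fintype.card (Vtx k) = 3 * k + 4 := card_vtx
  rw [Finset.card_sdiff_of_subset (Finset.subset_univ _), Finset.card_univ, h3, h1]
  rw [h1, h3] at h2
  omega

lemma uniqueDel {M T : Finset (Vtx k)} (hT : Indep T) (hMT : ∀ u ∈ T, u ∉ M)
    (hmax : ∀ T' : Finset (Vtx k), Indep T' → (∀ u ∈ T', u ∉ M) → T'.card ≤ T.card)
    (huniq : ∀ T' : Finset (Vtx k), Indep T' → (∀ u ∈ T', u ∉ M) →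
      T.card ≤ T'.card → T' = T) :
    HasUniqueMinVCDel (Gr k) M := by
  have hNcard := card_compl hMT
  have key : ∀ C : Finset (Vtx k), IsVertexCoverDel (Gr k) M C →
      (Finset.univ \ (M ∪ T)).card ≤ C.card := by
    intro C hC
    have h1 := compl_indep_of_coverDel hC
    have h2 : ∀ u ∈ Finset.univ \ (M ∪ C), u ∉ M := by
      intro u hu
      simp only [Finset.mem_sdiff, Finset.mem_univ, Finset.mem_union, true_and] at hu
      push_neg at hu
      exact hu.1
    have h3 := hmax _ h1 h2
    have e2 := card_compl hC.1
    omega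
  refine ⟨Finset.univ \ (M ∪ T), ⟨⟨coverDel_compl hT hMT, key⟩, ?_⟩⟩
  rintro C ⟨hCcov, hCmin⟩
  have hle : C.card ≤ (Finset.univ \ (M ∪ T)).card := hCmin _ (coverDel_compl hT hMT)
  have h1 := compl_indep_of_coverDel hCcov
  have h2 : ∀ u ∈ Finset.univ \ (M ∪ C), u ∉ M := by
    intro u hu
    simp only [Finset.mem_sdiff, Finset.mem_univ, Finset.mem_union, true_and] at hu
    push_neg at hu
    exact hu.1
  have e2 := card_compl hCcov.1
  have hT'card : T.card ≤ (Finset.univ \ (M ∪ C)).card := by omega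
  have hTT : Finset.univ \ (M ∪ C) = T := huniq _ h1 h2 hT'card
  have hsub : C ⊆ Finset.univ \ (M ∪ T) := by
    intro u hu
    have huM : u ∉ M := hCcov.1 u hu
    have huT : u ∉ T := by
      rw [← hTT]
      simp only [Finset.mem_sdiff, Finset.mem_univ, Finset.mem_union, true_and]
      push_neg
      exact Or.inr hu
    simp only [Finset.mem_sdiff, Finset.mem_univ, Finset.mem_union, true_and]
    push_neg
    exact ⟨huM, huT⟩
  exact Finset.eq_of_subset_of_card_le hsub (key C hCcov)

lemma notUniqueDel {M T1 T2 : Finset (Vtx k)} (h1 : Indep T1) (hM1 : ∀ u ∈ T1, u ∉ M)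
    (h2 : Indep T2) (hM2 : ∀ u ∈ T2, u ∉ M) (hne : T1 ≠ T2) (hcard : T1.card = T2.card)
    (hmax : ∀ T' : Finset (Vtx k), Indep T' → (∀ u ∈ T', u ∉ M) → T'.card ≤ T1.card) :
    ¬ HasUniqueMinVCDel (Gr k) M := by
  rintro ⟨N, ⟨hNcov, hNmin⟩, hNuniq⟩
  have key : ∀ S : Finset (Vtx k), Indep S → (∀ u ∈ S, u ∉ M) → S.card = T1.card →
      Finset.univ \ (M ∪ S) = N := by
    intro S hS hMS hSc
    refine hNuniq _ ⟨coverDel_compl hS hMS, ?_⟩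
    intro C hC
    have hi := compl_indep_of_coverDel hC
    have hm : ∀ u ∈ Finset.univ \ (M ∪ C), u ∉ M := by
      intro u hu
      simp only [Finset.mem_sdiff, Finset.mem_univ, Finset.mem_union, true_and] at hu
      push_neg at hu
      exact hu.1
    have h3 := hmax _ hi hm
    have e1 := card_compl hMS
    have e2 := card_compl hC.1
    omega
  have e1 := key T1 h1 hM1 rfl
  have e2 := key T2 h2 hM2 hcard.symm
  apply hne
  have e3 : Finset.univ \ (M ∪ T1) = Finset.univ \ (M ∪ T2) := e1.trans e2.symm
  ext u
  constructor
  · intro hu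
    have h4 : u ∉ Finset.univ \ (M ∪ T1) := by
      simp only [Finset.mem_sdiff, Finset.mem_univ, Finset.mem_union, true_and]
      push_neg
      exact Or.inr hu
    rw [e3] at h4
    simp only [Finset.mem_sdiff, Finset.mem_univ, Finset.mem_union, true_and] at h4
    push_neg at h4
    rcases h4 with h4 | h4
    · exact absurd h4 (hM1 u hu)
    · exact h4
  · intro hu
    have h4 : u ∉ Finset.univ \ (M ∪ T2) := by
      simp only [Finset.mem_sdiff, Finset.mem_univ, Finset.mem_union, true_and]
      push_neg
      exact Or.inr hu
    rw [← e3] at h4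
    simp only [Finset.mem_sdiff, Finset.mem_univ, Finset.mem_union, true_and] at h4
    push_neg at h4
    rcases h4 with h4 | h4
    · exact absurd h4 (hM2 u hu)
    · exact h4


/-! plain covers -/

lemma compl_indep_of_cover {U : Finset (Vtx k)} (h : IsVertexCover (Gr k) U) :
    Indep (Finset.univ \ U) := by
  intro u hu v hv hadj
  simp only [Finset.mem_sdiff, Finset.mem_univ, true_and] at hu hv
  rcases h hadj with h' | h'
  exacts [hu h', hv h']

lemma cover_compl {T : Finset (Vtx k)} (hT : Indep T) :
    IsVertexCover (Gr k) (Finset.univ \ T) := by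
  intro u v hadj
  by_contra hc
  push_neg at hc
  have hu : u ∈ T := by
    have := hc.1
    simp only [Finset.mem_sdiff, Finset.mem_univ, true_and, not_not] at this
    exact this
  have hv : v ∈ T := by
    have := hc.2
    simp only [Finset.mem_sdiff, Finset.mem_univ, true_and, not_not] at this
    exact this
  exact hT u hu v hv hadj

lemma card_compl1 (S : Finset (Vtx k)) :
    (Finset.univ \ S).card + S.card = 3 * k + 4 := by
  have h2 : S.card ≤ Fintype.card (Vtx k) := Finset.card_le_univ _
  have h3 : Fintype.card (Vtx k) = 3 * k + 4 := card_vtx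
  rw [Finset.card_sdiff_of_subset (Finset.subset_univ _), Finset.card_univ, h3]
  rw [h3] at h2
  omega

lemma cover_lb {U : Finset (Vtx k)} (hU : IsVertexCover (Gr k) U) :
    2 * k + 1 ≤ U.card := by
  have h1 := indep_card_le (compl_indep_of_cover hU)
  have h2 := card_compl1 U
  omega

lemma card_U0 : (Finset.univ \ I0 k).card = 2 * k + 1 := by
  have h1 := card_compl1 (I0 k)
  have h2 := card_I0 (k := k)
  omega

lemma card_UI (i : Fin k) : (Finset.univ \ II i).card = 2 * k + 1 := by
  have h1 := card_compl1 (II i)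
  have h2 := card_II i
  omega

lemma isMin_U0 : IsMinVertexCover (Gr k) (Finset.univ \ I0 k) := by
  refine ⟨cover_compl indep_I0, ?_⟩
  intro U' hU'
  rw [card_U0]
  exact cover_lb hU'

lemma isMin_UI (i : Fin k) : IsMinVertexCover (Gr k) (Finset.univ \ II i) := by
  refine ⟨cover_compl (indep_II i), ?_⟩
  intro U' hU'
  rw [card_UI]
  exact cover_lb hU'

lemma minCover_cases {U : Finset (Vtx k)} (h : IsMinVertexCover (Gr k) U) :
    U = Finset.univ \ I0 k ∨ ∃ i, U = Finset.univ \ II i := by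
  have hle : U.card ≤ 2 * k + 1 := by
    have := h.2 _ (cover_compl indep_I0)
    rw [card_U0] at this
    exact this
  have hTi := compl_indep_of_cover h.1
  have hTc := card_compl1 U
  have hTcard : k + 3 ≤ (Finset.univ \ U).card := by
    have h2 := card_compl1 (Finset.univ \ U)
    omega
  have hsub : ∀ S : Finset (Vtx k), Finset.univ \ U = S → S.card = k + 3 → U = Finset.univ \ S := by
    intro S hS hSc
    have hUsub : U ⊆ Finset.univ \ S := by
      intro u hu
      rw [← hS]
      simp only [Finset.mem_sdiff, Finset.mem_univ, true_and, not_not]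
      exact hu
    refine Finset.eq_of_subset_of_card_le hUsub ?_
    have h1 := card_compl1 S
    have h2 : (Finset.univ \ U).card = S.card := by rw [hS]
    omega
  rcases indep_eq hTi hTcard with hh | ⟨i, hh⟩
  · exact Or.inl (hsub _ hh (by rw [card_I0]))
  · exact Or.inr ⟨i, hsub _ hh (by rw [card_II])⟩



lemma b_not_mem_I0 (i : Fin k) : Vtx.b i ∉ I0 k := by simp [I0]
lemma b_not_mem_II (i j : Fin k) : Vtx.b i ∉ II j := by simp [II]
lemma z_not_mem_I0 : Vtx.z ∉ I0 k := by simp [I0]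
lemma z_not_mem_II (j : Fin k) : Vtx.z ∉ II j := by simp [II]
lemma w_not_mem_AA : Vtx.w ∉ AA k := by simp

lemma mem_II_cases {u : Vtx k} {l : Fin k} (h : u ∈ II l) : u ∈ I0 k ∨ u = Vtx.a l := by
  simp only [II, I0, Finset.mem_union, Finset.mem_insert, Finset.mem_singleton] at h ⊢
  tauto

lemma mem_I0_cases {u : Vtx k} (l : Fin k) (h : u ∈ I0 k) : u ∈ II l ∨ u = Vtx.w := by
  simp only [II, I0, Finset.mem_union, Finset.mem_insert, Finset.mem_singleton] at h ⊢
  tauto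

end Vtx

open Vtx

/-- For every `k ≥ 3` there is a finite graph `G` such that (i) some set `M` of
size 2 is an MU-VC solution while no set of size at most 1 is, and (ii) every
PAU-VC solution `P` of `G` has size at least `k`. -/
theorem exists_graph_muvc_two_pauvc_ge (k : ℕ) (hk : 3 ≤ k) :
    ∃ (V : Type) (_ : Fintype V) (_ : DecidableEq V) (G : SimpleGraph V),
      (∃ M : Finset V, M.card = 2 ∧ HasUniqueMinVCDel G M) ∧
      (∀ M : Finset V, M.card ≤ 1 → ¬ HasUniqueMinVCDel G M) ∧
      (∀ P : Finset V,
        (∃! U : Finset V, IsMinVertexCover G U ∧ P ⊆ U) → k ≤ P.card) := by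
  have hk0 : 0 < k := by omega
  set i0 : Fin k := ⟨0, by omega⟩ with hi0
  set i1 : Fin k := ⟨1, by omega⟩ with hi1
  have hi01 : i0 ≠ i1 := by simp [hi0, hi1, Fin.ext_iff]
  refine ⟨Vtx k, inferInstance, inferInstance, Gr k, ?_, ?_, ?_⟩
  · -- (i) existence of an MU-VC solution of size 2
    refine ⟨{Vtx.x, Vtx.y}, by simp, ?_⟩
    apply uniqueDel (T := JJ k) indep_JJ
    · intro u hu hM
      simp only [Finset.mem_insert, Finset.mem_singleton] at hM
      rcases hM with rfl | rfl <;> simp [JJ] at hu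
    · intro T' h1 h2
      rw [card_JJ]
      exact indep_xy_card_le h1 (fun hx => h2 _ hx (by simp)) (fun hy => h2 _ hy (by simp))
    · intro T' h1 h2 hc
      rw [card_JJ] at hc
      exact indep_xy_eq h1 (fun hx => h2 _ hx (by simp)) (fun hy => h2 _ hy (by simp)) hc
  · -- (ii) no MU-VC solution of size ≤ 1
    intro M hM
    have hcard01 : (I0 k).card = (II i0).card := by rw [card_I0, card_II]
    have hne0 : I0 k ≠ II i0 := fun h => w_not_mem_II i0 (h ▸ w_mem_I0)
    have hmax3 : ∀ T' : Finset (Vtx k), Indep T' → T'.card ≤ (I0 k).card := by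
      intro T' h1
      rw [card_I0]
      exact indep_card_le h1
    rcases Finset.eq_empty_or_nonempty M with rfl | ⟨v, hv⟩
    · exact notUniqueDel indep_I0 (by simp) (indep_II i0) (by simp) hne0 hcard01
        (fun T' h1 _ => hmax3 T' h1)
    · have hMv : M = {v} :=
        Finset.eq_singleton_iff_unique_mem.mpr
          ⟨hv, fun b hb => Finset.card_le_one.mp hM b hb v hv⟩
      subst hMv
      -- helper for the "v in every max independent set" cases
      have eraseCase : ∀ v : Vtx k, v ∈ I0 k → (∀ j, v ∈ II j) →
          ¬ HasUniqueMinVCDel (Gr k) {v} := by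
        intro v hv0 hvi
        have hc1 : ((I0 k).erase v).card = k + 2 := by
          rw [Finset.card_erase_of_mem hv0, card_I0]
          omega
        have hc2 : ((II i0).erase v).card = k + 2 := by
          rw [Finset.card_erase_of_mem (hvi i0), card_II]
          omega
        have hwv : Vtx.w ≠ v := by
          intro h
          exact w_not_mem_II i0 (h ▸ hvi i0)
        refine notUniqueDel (M := {v})
          (indep_I0.mono (Finset.erase_subset _ _))
          (fun u hu hm => (Finset.mem_erase.mp hu).1 (Finset.mem_singleton.mp hm))
          ((indep_II i0).mono (Finset.erase_subset _ _))
          (fun u hu hm => (Finset.mem_erase.mp hu).1 (Finset.mem_singleton.mp hm))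
          ?_ (by rw [hc1, hc2]) ?_
        · intro h
          have hw1 : Vtx.w ∈ (I0 k).erase v := Finset.mem_erase.mpr ⟨hwv, w_mem_I0⟩
          rw [h] at hw1
          exact w_not_mem_II i0 (Finset.mem_of_mem_erase hw1)
        · intro T' h1 h2
          rw [hc1]
          exact indep_card_le_of_mem_all h1 hv0 hvi
            (fun h => h2 _ h (Finset.mem_singleton_self v))
      cases v with
      | a i =>
          have hnei : ∃ j, j ≠ i := by
            by_cases h : i = i0
            · exact ⟨i1, by rw [h]; exact hi01.symm⟩
            · exact ⟨i0, fun hh => h (hh.symm)⟩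
          obtain ⟨j, hj⟩ := hnei
          refine notUniqueDel indep_I0 ?_ (indep_II j) ?_
            (fun h => w_not_mem_II j (h ▸ w_mem_I0)) (by rw [card_I0, card_II])
            (fun T' h1 _ => hmax3 T' h1)
          · intro u hu hm
            rw [Finset.mem_singleton] at hm
            subst hm
            exact a_not_mem_I0 i hu
          · intro u hu hm
            rw [Finset.mem_singleton] at hm
            subst hm
            exact hj (a_mem_II_iff.mp hu).symm
      | b i =>
          refine notUniqueDel indep_I0 ?_ (indep_II i0) ?_ hne0 hcard01
            (fun T' h1 _ => hmax3 T' h1)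
          · intro u hu hm
            rw [Finset.mem_singleton] at hm
            subst hm
            exact b_not_mem_I0 i hu
          · intro u hu hm
            rw [Finset.mem_singleton] at hm
            subst hm
            exact b_not_mem_II i i0 hu
      | d i => exact eraseCase _ (d_mem_I0 i) (d_mem_II i)
      | x => exact eraseCase _ x_mem_I0 x_mem_II
      | y => exact eraseCase _ y_mem_I0 y_mem_II
      | w =>
          refine notUniqueDel (indep_II i0) ?_ (indep_II i1) ?_ ?_
            (by rw [card_II, card_II]) ?_
          · intro u hu hm
            rw [Finset.mem_singleton] at hm
            subst hm
            exact w_not_mem_II i0 hu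
          · intro u hu hm
            rw [Finset.mem_singleton] at hm
            subst hm
            exact w_not_mem_II i1 hu
          · intro h
            have := a_mem_II (k := k) i0
            rw [h] at this
            exact hi01 (a_mem_II_iff.mp this)
          · intro T' h1 _
            rw [card_II]
            exact indep_card_le h1
      | z =>
          refine notUniqueDel indep_I0 ?_ (indep_II i0) ?_ hne0 hcard01
            (fun T' h1 _ => hmax3 T' h1)
          · intro u hu hm
            rw [Finset.mem_singleton] at hm
            subst hm
            exact z_not_mem_I0 hu
          · intro u hu hm
            rw [Finset.mem_singleton] at hm
            subst hm
            exact z_not_mem_II i0 hu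
  · -- (iii) every PAU-VC solution has size ≥ k
    rintro P ⟨U, ⟨hUmin, hPU⟩, hUuniq⟩
    rcases minCover_cases hUmin with rfl | ⟨i, rfl⟩
    · -- the unique min cover containing P is the complement of I0
      have hA : ∀ l : Fin k, Vtx.a l ∈ P := by
        intro l
        by_contra hal
        have hsub : P ⊆ Finset.univ \ II l := by
          intro u hu
          have h2 := hPU hu
          simp only [Finset.mem_sdiff, Finset.mem_univ, true_and] at h2 ⊢
          intro hc
          rcases mem_II_cases hc with h3 | rfl
          · exact h2 h3
          · exact hal hu
        have heq := hUuniq _ ⟨isMin_UI l, hsub⟩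
        have hw : Vtx.w ∈ Finset.univ \ II l := by
          simp only [Finset.mem_sdiff, Finset.mem_univ, true_and]
          exact w_not_mem_II l
        rw [heq] at hw
        simp only [Finset.mem_sdiff, Finset.mem_univ, true_and] at hw
        exact hw w_mem_I0
      have hsubA : AA k ⊆ P := by
        intro u hu
        rcases mem_AA.mp hu with ⟨l, rfl⟩
        exact hA l
      have := Finset.card_le_card hsubA
      rw [card_AA] at this
      exact this
    · -- the unique min cover containing P is the complement of II i
      have hw : Vtx.w ∈ P := by
        by_contra hw
        have hsub : P ⊆ Finset.univ \ I0 k := by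
          intro u hu
          have h2 := hPU hu
          simp only [Finset.mem_sdiff, Finset.mem_univ, true_and] at h2 ⊢
          intro hc
          rcases mem_I0_cases i hc with h3 | rfl
          · exact h2 h3
          · exact hw hu
        have heq := hUuniq _ ⟨isMin_U0, hsub⟩
        have hww : Vtx.w ∈ Finset.univ \ II i := by
          simp only [Finset.mem_sdiff, Finset.mem_univ, true_and]
          exact w_not_mem_II i
        rw [← heq] at hww
        simp only [Finset.mem_sdiff, Finset.mem_univ, true_and] at hww
        exact hww w_mem_I0
      have hA : ∀ l : Fin k, l ≠ i → Vtx.a l ∈ P := by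
        intro l hl
        by_contra hal
        have hsub : P ⊆ Finset.univ \ II l := by
          intro u hu
          have h2 := hPU hu
          simp only [Finset.mem_sdiff, Finset.mem_univ, true_and] at h2 ⊢
          intro hc
          rcases mem_II_cases hc with h3 | rfl
          · rcases mem_I0_cases i h3 with h4 | rfl
            · exact h2 h4
            · exact w_not_mem_II l hc
          · exact hal hu
        have heq := hUuniq _ ⟨isMin_UI l, hsub⟩
        have h5 : Vtx.a l ∈ Finset.univ \ II i := by
          simp only [Finset.mem_sdiff, Finset.mem_univ, true_and]
          intro h6
          exact hl (a_mem_II_iff.mp h6)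
        rw [← heq] at h5
        simp only [Finset.mem_sdiff, Finset.mem_univ, true_and] at h5
        exact h5 (a_mem_II l)
      have hsub2 : insert Vtx.w ((AA k).erase (Vtx.a i)) ⊆ P := by
        intro u hu
        rcases Finset.mem_insert.mp hu with rfl | hu
        · exact hw
        · obtain ⟨hne, hAA⟩ := Finset.mem_erase.mp hu
          rcases mem_AA.mp hAA with ⟨l, rfl⟩
          exact hA l (fun h => hne (by rw [h]))
      have e1 : ((AA k).erase (Vtx.a i)).card = k - 1 := by
        rw [Finset.card_erase_of_mem (by simp), card_AA]
      have e2 : (insert Vtx.w ((AA k).erase (Vtx.a i))).card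
          = ((AA k).erase (Vtx.a i)).card + 1 := by
        rw [Finset.card_insert_of_notMem]
        intro h
        exact w_not_mem_AA (Finset.mem_of_mem_erase h)
      have e3 := Finset.card_le_card hsub2
      omega
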